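/- Necessity core of Theorem 3(B) (efficiency gap for joint quantile and Expected Shortfall models): In the quantile–ES block setup, assume a' > 0 and φ'' > 0 ℙ-a.s., V_q ≠ 0 and V_e ≠ 0 ℙ-a.s., and that V_q satisfies the richness condition in ℝ^{q₁} and V_e satisfies the richness condition in ℝ^{q₂}. If there exists an invertible deterministic matrix C ∈ ℝ^{q×q} such that A = C Dᵀ S⁻¹ ℙ-a.s., then there exist constants c₁ > 0, c₃ > 0 and c₆ > 0 such that, ℙ-a.s., v = c₁ (q_v − e_v)², φ'' = c₃ / v, and a' = c₆ f (conditions (20), (22) and (25) of the paper). -/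

import Mathlib

open MeasureTheory Matrix

/-- The matrix `D` of the quantile–ES block setup: first row `(f V_qᵀ, 0)`,
second row `(0, V_eᵀ)`. -/
def qesD {q₁ q₂ : ℕ} (f : ℝ) (Vq : Fin q₁ → ℝ) (Ve : Fin q₂ → ℝ) :
    Matrix (Fin 2) (Fin q₁ ⊕ Fin q₂) ℝ :=
  Matrix.of fun i j =>
    Sum.elim (fun j₁ => if i = 0 then f * Vq j₁ else 0)
      (fun j₂ => if i = 1 then Ve j₂ else 0) j

/-- The M-estimator instrument matrix `A` of the quantile–ES block setup:
first column `(a' V_q, 0)ᵀ`, second column `(0, φ'' V_e)ᵀ`. -/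
def qesA {q₁ q₂ : ℕ} (a' phi'' : ℝ) (Vq : Fin q₁ → ℝ) (Ve : Fin q₂ → ℝ) :
    Matrix (Fin q₁ ⊕ Fin q₂) (Fin 2) ℝ :=
  Matrix.of fun i j =>
    Sum.elim (fun i₁ => if j = 0 then a' * Vq i₁ else 0)
      (fun i₂ => if j = 1 then phi'' * Ve i₂ else 0) i

/-- The conditional second-moment matrix `S` of the quantile–ES block setup. -/
noncomputable def qesS (α qv ev v : ℝ) : Matrix (Fin 2) (Fin 2) ℝ :=
  !![α * (1 - α), (1 - α) * (qv - ev);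
     (1 - α) * (qv - ev), v / α + (1 - α) * (qv - ev) ^ 2 / α]

/-- Richness condition (condition (QES2) of the paper). -/
def Rich {Ω : Type*} [MeasureSpace Ω] {n : ℕ} (V : Ω → Fin n → ℝ) : Prop :=
  ∀ B : Set Ω, MeasurableSet B → volume B = 1 →
    ∃ v : Fin (n + 1) → Fin n → ℝ, Function.Injective v ∧
      (∀ i, ∃ ω ∈ B, V ω = v i) ∧
      ∀ i : Fin (n + 1),
        LinearIndependent ℝ fun j : {j : Fin (n + 1) // j ≠ i} => v j.1

lemma qes_key {q₁ q₂ : ℕ} {α a' phi'' f v qv ev : ℝ} {Vq : Fin q₁ → ℝ} {Ve : Fin q₂ → ℝ}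
    (C : Matrix (Fin q₁ ⊕ Fin q₂) (Fin q₁ ⊕ Fin q₂) ℝ)
    (hα0 : 0 < α) (hα1 : α < 1) (hf : 0 < f) (hv : 0 < v)
    (hA : qesA a' phi'' Vq Ve = C * (qesD f Vq Ve)ᵀ * (qesS α qv ev v)⁻¹) :
    (Matrix.of fun i j => C (Sum.inl i) (Sum.inl j)).mulVec Vq = (α * (1 - α) * a' / f) • Vq ∧
    (Matrix.of fun i j => C (Sum.inl i) (Sum.inr j)).mulVec Ve = ((1 - α) * (qv - ev) * a') • Vq ∧
    (Matrix.of fun i j => C (Sum.inr i) (Sum.inl j)).mulVec Vq = ((1 - α) * (qv - ev) * phi'' / f) • Ve ∧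
    (Matrix.of fun i j => C (Sum.inr i) (Sum.inr j)).mulVec Ve = ((phi'' * (v + (1 - α) * (qv - ev) ^ 2)) / α) • Ve := by
  have hαne : α ≠ 0 := ne_of_gt hα0
  have hfne : f ≠ 0 := ne_of_gt hf
  have h1α : (0:ℝ) < 1 - α := by linarith
  have hdet : (qesS α qv ev v).det = (1 - α) * v := by
    rw [qesS, Matrix.det_fin_two_of]; field_simp; ring
  have hunit : IsUnit (qesS α qv ev v).det := by
    rw [hdet]; exact isUnit_iff_ne_zero.mpr (by positivity)
  have hAS : qesA a' phi'' Vq Ve * qesS α qv ev v = C * (qesD f Vq Ve)ᵀ := by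
    rw [hA, Matrix.mul_assoc (C * (qesD f Vq Ve)ᵀ), Matrix.nonsing_inv_mul _ hunit, Matrix.mul_one]
  refine ⟨?_, ?_, ?_, ?_⟩
  · funext i
    have h := congrFun (congrFun hAS (Sum.inl i)) 0
    simp [qesA, qesD, qesS, Matrix.mul_apply, Fin.sum_univ_two, Fintype.sum_sum_type] at h
    have hsval : ∑ x, C (Sum.inl i) (Sum.inl x) * Vq x = a' * Vq i * (α * (1 - α)) / f := by
      rw [eq_div_iff hfne]
      rw [h, Finset.sum_mul]
      exact Finset.sum_congr rfl fun x _ => by ring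
    simp only [Matrix.mulVec, dotProduct, Matrix.of_apply, Pi.smul_apply, smul_eq_mul]
    rw [hsval]; ring
  · funext i
    have h := congrFun (congrFun hAS (Sum.inl i)) 1
    simp [qesA, qesD, qesS, Matrix.mul_apply, Fin.sum_univ_two, Fintype.sum_sum_type] at h
    simp only [Matrix.mulVec, dotProduct, Matrix.of_apply, Pi.smul_apply, smul_eq_mul]
    rw [← h]; ring
  · funext i
    have h := congrFun (congrFun hAS (Sum.inr i)) 0
    simp [qesA, qesD, qesS, Matrix.mul_apply, Fin.sum_univ_two, Fintype.sum_sum_type] at h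
    have hsval : ∑ x, C (Sum.inr i) (Sum.inl x) * Vq x = phi'' * Ve i * ((1 - α) * (qv - ev)) / f := by
      rw [eq_div_iff hfne]
      rw [h, Finset.sum_mul]
      exact Finset.sum_congr rfl fun x _ => by ring
    simp only [Matrix.mulVec, dotProduct, Matrix.of_apply, Pi.smul_apply, smul_eq_mul]
    rw [hsval]; ring
  · funext i
    have h := congrFun (congrFun hAS (Sum.inr i)) 1
    simp [qesA, qesD, qesS, Matrix.mul_apply, Fin.sum_univ_two, Fintype.sum_sum_type] at h
    simp only [Matrix.mulVec, dotProduct, Matrix.of_apply, Pi.smul_apply, smul_eq_mul]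
    rw [← h]; field_simp
lemma rich_eigen {Ω : Type*} [MeasureSpace Ω] {n : ℕ}
    {V : Ω → Fin n → ℝ} (hrich : Rich V)
    (M : Matrix (Fin n) (Fin n) ℝ) (lam : Ω → ℝ) {B : Set Ω}
    (hBm : MeasurableSet B) (hB1 : volume B = 1)
    (hne : ∀ ω ∈ B, V ω ≠ 0)
    (heig : ∀ ω ∈ B, M.mulVec (V ω) = lam ω • V ω) :
    ∃ c : ℝ, ∀ ω ∈ B, lam ω = c := by
  obtain ⟨w, hinj, hatt, hli⟩ := hrich B hBm hB1
  choose ω₀ hω₀B hω₀V using hatt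
  set μ : Fin (n + 1) → ℝ := fun i => lam (ω₀ i) with hμdef
  have hMw : ∀ i, M.mulVec (w i) = μ i • w i := fun i => by
    rw [← hω₀V i]; exact heig _ (hω₀B i)
  have hwne : ∀ i, w i ≠ 0 := fun i => (hω₀V i) ▸ hne _ (hω₀B i)
  have hfr : Module.finrank ℝ (Fin n → ℝ) = n := by simp
  have hdep : ¬ LinearIndependent ℝ w := by
    intro h
    have hcard := h.fintype_card_le_finrank
    rw [hfr, Fintype.card_fin] at hcard
    omega
  -- any vanishing coefficient forces all to vanish
  have hzero : ∀ (g : Fin (n+1) → ℝ), (∑ i, g i • w i) = 0 → ∀ j, g j = 0 → ∀ i, g i = 0 := by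
    intro g hg j hgj i
    have hsub : ∑ k : {k : Fin (n+1) // k ≠ j}, g k.1 • w k.1 = 0 := by
      rw [← Finset.sum_subtype (Finset.univ.erase j)
          (fun x => by simp [Finset.mem_erase]) (fun i => g i • w i)]
      rw [Finset.sum_erase _ (by rw [hgj, zero_smul])]
      exact hg
    have h2 := (Fintype.linearIndependent_iff.mp (hli j)) (fun k => g k.1) hsub
    by_cases hij : i = j
    · rw [hij]; exact hgj
    · exact h2 ⟨i, hij⟩
  obtain ⟨g, hgsum, i₀, hgi₀⟩ := Fintype.not_linearIndependent_iff.mp hdep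
  have hgne : ∀ i, g i ≠ 0 := by
    intro i hgi
    exact hgi₀ (hzero g hgsum i hgi i₀)
  set c := μ i₀ with hcdef
  have hμeq : ∀ i, μ i = c := by
    intro i
    have hA' : ∑ k, (g k * μ k) • w k = 0 := by
      have h0 : M.mulVecLin (∑ k, g k • w k) = 0 := by rw [hgsum]; simp
      rw [map_sum] at h0
      simp only [_root_.map_smul, Matrix.mulVecLin_apply, hMw, smul_smul] at h0
      exact h0
    have hB' : ∑ k, (c * g k) • w k = 0 := by
      simp only [mul_smul]
      rw [← Finset.smul_sum, hgsum, smul_zero]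
    have hsum1 : ∑ k, (g k * (μ k - c)) • w k = 0 := by
      have hd : ∑ k, ((g k * μ k) • w k - (c * g k) • w k) = 0 := by
        rw [Finset.sum_sub_distrib, hA', hB', sub_zero]
      calc ∑ k, (g k * (μ k - c)) • w k
          = ∑ k, ((g k * μ k) • w k - (c * g k) • w k) := by
            apply Finset.sum_congr rfl; intro k _
            rw [← sub_smul]; ring_nf
        _ = 0 := hd
    have hco := hzero _ hsum1 i₀ (by rw [← hcdef]; ring) i
    rcases mul_eq_zero.mp hco with h | h
    · exact absurd h (hgne i)
    · exact sub_eq_zero.mp h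
  have hcard : Fintype.card {k : Fin (n+1) // k ≠ i₀} = Module.finrank ℝ (Fin n → ℝ) := by
    rw [hfr]
    simp [Fintype.card_subtype_compl]
  by_cases hn : n = 0
  · -- B must be empty-ish: V ω = 0 always, contradicting hne unless B empty
    refine ⟨0, fun ω hω => absurd ?_ (hne ω hω)⟩
    subst hn
    ext i; exact absurd i.2 (by omega)
  · haveI : Nonempty {k : Fin (n+1) // k ≠ i₀} := by
      rw [← Fintype.card_pos_iff, hcard, hfr]; omega
    have hMall : ∀ x : Fin n → ℝ, M.mulVec x = c • x := by
      have hml : M.mulVecLin = c • LinearMap.id := by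
        apply Module.Basis.ext (basisOfLinearIndependentOfCardEqFinrank (hli i₀) hcard)
        intro k
        rw [coe_basisOfLinearIndependentOfCardEqFinrank]
        simp [Matrix.mulVecLin_apply, hMw k.1, hμeq k.1]
      intro x
      have := LinearMap.ext_iff.mp hml x
      simpa [Matrix.mulVecLin_apply] using this
    refine ⟨c, fun ω hω => ?_⟩
    have h1 := heig ω hω
    rw [hMall] at h1
    have h2 : (lam ω - c) • V ω = 0 := by rw [sub_smul, h1, sub_self]
    rcases smul_eq_zero.mp h2 with h | h
    · exact sub_eq_zero.mp h
    · exact absurd h (hne ω hω)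
/-- Necessity core of Theorem 3(B): if the M-estimator instrument matrix
`A` of the quantile–ES model coincides a.s. with an efficient instrument `C Dᵀ S⁻¹` for
some deterministic invertible `C`, then there are constants `c₁, c₃, c₆ > 0` such that,
ℙ-a.s., `v = c₁ (q_v − e_v)²`, `φ'' = c₃ / v` and `a' = c₆ f`
(conditions (20), (22) and (25) of the paper). -/
theorem qes_efficiency_gap_necessity
    {Ω : Type*} [MeasureSpace Ω] [IsProbabilityMeasure (volume : Measure Ω)]
    {q₁ q₂ : ℕ} (hq₁ : 1 ≤ q₁) (hq₂ : 1 ≤ q₂)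
    {α : ℝ} (hα : α ∈ Set.Ioo (0 : ℝ) 1)
    (Vq : Ω → Fin q₁ → ℝ) (Ve : Ω → Fin q₂ → ℝ) (f v qv ev g' phi' phi'' : Ω → ℝ)
    (hVqmeas : Measurable Vq) (hVemeas : Measurable Ve)
    (hfmeas : Measurable f) (hvmeas : Measurable v)
    (hqvmeas : Measurable qv) (hevmeas : Measurable ev)
    (hg'meas : Measurable g') (hphi'meas : Measurable phi')
    (hphi''meas : Measurable phi'')
    (hfpos : ∀ᵐ ω, 0 < f ω) (hvpos : ∀ᵐ ω, 0 < v ω)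
    (hqe : ∀ᵐ ω, ev ω < qv ω)
    (ha'pos : ∀ᵐ ω, 0 < g' ω + phi' ω / α)
    (hphi''pos : ∀ᵐ ω, 0 < phi'' ω)
    (hVqne : ∀ᵐ ω, Vq ω ≠ 0) (hVene : ∀ᵐ ω, Ve ω ≠ 0)
    (hrichq : Rich Vq) (hriche : Rich Ve)
    (hCex : ∃ C : Matrix (Fin q₁ ⊕ Fin q₂) (Fin q₁ ⊕ Fin q₂) ℝ, IsUnit C.det ∧
      ∀ᵐ ω, qesA (g' ω + phi' ω / α) (phi'' ω) (Vq ω) (Ve ω)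
        = C * (qesD (f ω) (Vq ω) (Ve ω))ᵀ * (qesS α (qv ω) (ev ω) (v ω))⁻¹) :
    ∃ c₁ > (0 : ℝ), ∃ c₃ > (0 : ℝ), ∃ c₆ > (0 : ℝ),
      (∀ᵐ ω, v ω = c₁ * (qv ω - ev ω) ^ 2) ∧
      (∀ᵐ ω, phi'' ω = c₃ / v ω) ∧
      (∀ᵐ ω, g' ω + phi' ω / α = c₆ * f ω) := by
  obtain ⟨hα0, hα1⟩ := hα
  have h1α : (0:ℝ) < 1 - α := by linarith
  have hαne : α ≠ 0 := ne_of_gt hα0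
  obtain ⟨C, -, hAae⟩ := hCex
  have hP : ∀ᵐ ω, 0 < f ω ∧ 0 < v ω ∧ ev ω < qv ω ∧ 0 < g' ω + phi' ω / α ∧
      0 < phi'' ω ∧ Vq ω ≠ 0 ∧ Ve ω ≠ 0 ∧
      qesA (g' ω + phi' ω / α) (phi'' ω) (Vq ω) (Ve ω)
        = C * (qesD (f ω) (Vq ω) (Ve ω))ᵀ * (qesS α (qv ω) (ev ω) (v ω))⁻¹ := by
    filter_upwards [hfpos, hvpos, hqe, ha'pos, hphi''pos, hVqne, hVene, hAae] with
      ω h1 h2 h3 h4 h5 h6 h7 h8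
    exact ⟨h1, h2, h3, h4, h5, h6, h7, h8⟩
  obtain ⟨t, hts, htm, ht0⟩ := exists_measurable_superset_of_null (ae_iff.mp hP)
  have hBm : MeasurableSet tᶜ := htm.compl
  have hB1 : volume tᶜ = 1 := by
    rw [measure_compl htm (measure_ne_top _ _), ht0, measure_univ, tsub_zero]
  have hBP : ∀ ω ∈ tᶜ, 0 < f ω ∧ 0 < v ω ∧ ev ω < qv ω ∧ 0 < g' ω + phi' ω / α ∧
      0 < phi'' ω ∧ Vq ω ≠ 0 ∧ Ve ω ≠ 0 ∧
      qesA (g' ω + phi' ω / α) (phi'' ω) (Vq ω) (Ve ω)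
        = C * (qesD (f ω) (Vq ω) (Ve ω))ᵀ * (qesS α (qv ω) (ev ω) (v ω))⁻¹ :=
    fun ω hω => by_contra fun hc => hω (hts hc)
  have hBae : ∀ᵐ ω, ω ∈ tᶜ := by
    rw [ae_iff]
    convert ht0 using 2
    ext ω; simp
  have hkey := fun ω (hω : ω ∈ tᶜ) =>
    qes_key C hα0 hα1 (hBP ω hω).1 (hBP ω hω).2.1 (hBP ω hω).2.2.2.2.2.2.2
  obtain ⟨ca, hca⟩ := rich_eigen hrichq (Matrix.of fun i j => C (Sum.inl i) (Sum.inl j))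
    (fun ω => α * (1 - α) * (g' ω + phi' ω / α) / f ω) hBm hB1
    (fun ω hω => (hBP ω hω).2.2.2.2.2.1) (fun ω hω => (hkey ω hω).1)
  obtain ⟨cd, hcd⟩ := rich_eigen hriche (Matrix.of fun i j => C (Sum.inr i) (Sum.inr j))
    (fun ω => phi'' ω * (v ω + (1 - α) * (qv ω - ev ω) ^ 2) / α) hBm hB1
    (fun ω hω => (hBP ω hω).2.2.2.2.2.2.1) (fun ω hω => (hkey ω hω).2.2.2)
  obtain ⟨k, hk⟩ := rich_eigen hrichq
    ((Matrix.of fun i j => C (Sum.inl i) (Sum.inr j)) *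
      (Matrix.of fun i j => C (Sum.inr i) (Sum.inl j)))
    (fun ω => ((1 - α) * (qv ω - ev ω) * phi'' ω / f ω) *
      ((1 - α) * (qv ω - ev ω) * (g' ω + phi' ω / α)))
    hBm hB1 (fun ω hω => (hBP ω hω).2.2.2.2.2.1)
    (fun ω hω => by
      rw [← Matrix.mulVec_mulVec, (hkey ω hω).2.2.1, Matrix.mulVec_smul,
        (hkey ω hω).2.1, smul_smul])
  obtain ⟨ω₀, hω₀⟩ := MeasureTheory.nonempty_of_measure_ne_zero
    (show volume tᶜ ≠ 0 by rw [hB1]; exact one_ne_zero)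
  obtain ⟨hf₀, hv₀, hqe₀, ha₀, hp₀, -, -, -⟩ := hBP ω₀ hω₀
  have hcapos : 0 < ca := by
    rw [← hca ω₀ hω₀]
    exact div_pos (mul_pos (mul_pos hα0 h1α) ha₀) hf₀
  set c₆ : ℝ := ca / (α * (1 - α)) with hc₆def
  have hc₆pos : 0 < c₆ := div_pos hcapos (mul_pos hα0 h1α)
  have hc₆ne : c₆ ≠ 0 := ne_of_gt hc₆pos
  have ha'B : ∀ ω ∈ tᶜ, g' ω + phi' ω / α = c₆ * f ω := by
    intro ω hω
    have h := hca ω hω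
    have hfω : f ω ≠ 0 := ne_of_gt (hBP ω hω).1
    rw [hc₆def]
    field_simp
    field_simp at h
    linarith [h]
  have hkpos : 0 < k := by
    rw [← hk ω₀ hω₀]
    have h2 : (0:ℝ) < qv ω₀ - ev ω₀ := by linarith
    have := mul_pos (mul_pos h1α h2) hp₀
    exact mul_pos (div_pos this hf₀) (mul_pos (mul_pos h1α h2) ha₀)
  set k₁ : ℝ := k / ((1 - α) ^ 2 * c₆) with hk₁def
  have hk₁pos : 0 < k₁ := div_pos hkpos (mul_pos (by positivity) hc₆pos)
  have hk₁B : ∀ ω ∈ tᶜ, (qv ω - ev ω) ^ 2 * phi'' ω = k₁ := by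
    intro ω hω
    have h := hk ω hω
    have hfω : f ω ≠ 0 := ne_of_gt (hBP ω hω).1
    rw [ha'B ω hω] at h
    have h2 : (1 - α) ^ 2 * c₆ * ((qv ω - ev ω) ^ 2 * phi'' ω) = k := by
      rw [← h]; field_simp
    rw [hk₁def, ← h2]
    field_simp
  set k₃ : ℝ := α * cd - (1 - α) * k₁ with hk₃def
  have hk₃B : ∀ ω ∈ tᶜ, phi'' ω * v ω = k₃ := by
    intro ω hω
    have h := hcd ω hω
    have h2 := hk₁B ω hω
    have h3 : phi'' ω * (v ω + (1 - α) * (qv ω - ev ω) ^ 2) = α * cd := by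
      rw [← h]; field_simp
    rw [hk₃def]
    linear_combination h3 - (1 - α) * h2
  have hk₃pos : 0 < k₃ := by
    rw [← hk₃B ω₀ hω₀]; exact mul_pos hp₀ hv₀
  refine ⟨k₃ / k₁, div_pos hk₃pos hk₁pos, k₃, hk₃pos, c₆, hc₆pos, ?_, ?_, ?_⟩
  · filter_upwards [hBae] with ω hω
    have h1 := hk₃B ω hω
    have h2 := hk₁B ω hω
    have hk₁ne : k₁ ≠ 0 := ne_of_gt hk₁pos
    have hpne : phi'' ω ≠ 0 := ne_of_gt (hBP ω hω).2.2.2.2.1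
    field_simp
    linear_combination (qv ω - ev ω) ^ 2 * h1 - v ω * h2
  · filter_upwards [hBae] with ω hω
    have h1 := hk₃B ω hω
    have hvne : v ω ≠ 0 := ne_of_gt (hBP ω hω).2.1
    field_simp
    linear_combination h1
  · filter_upwards [hBae] with ω hω
    exact ha'B ω hω
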